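/- Let k be a field, let f and g be polynomials in one variable over k, suppose f and g are coprime, and suppose that the derivative g′ of g is nonzero. Then for every constant C ∈ k one has f′·g − g′·f ≠ C·g². -/
import Mathlib


/-- If `f, g ∈ k[X]` are coprime and `g′ ≠ 0`, then for every constant `C ∈ k`
one has `f′·g − g′·f ≠ C·g²`. -/
theorem derivative_cross_ne_const_mul_sq {k : Type*} [Field k]
    (f g : Polynomial k) (hco : IsCoprime f g)
    (hg : Polynomial.derivative g ≠ 0) (C : k) :
    Polynomial.derivative f * g - Polynomial.derivative g * f ≠
      Polynomial.C C * g ^ 2 := by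
  intro h
  have hdvd : g ∣ Polynomial.derivative g * f := by
    have : Polynomial.derivative g * f =
        Polynomial.derivative f * g - Polynomial.C C * g ^ 2 := by
      linear_combination -h
    rw [this]
    exact dvd_sub ⟨Polynomial.derivative f, by ring⟩ ⟨Polynomial.C C * g, by ring⟩
  have hdg : g ∣ Polynomial.derivative g :=
    (hco.symm.dvd_of_dvd_mul_right hdvd)
  have hglt : Polynomial.degree (Polynomial.derivative g) < Polynomial.degree g :=
    Polynomial.degree_derivative_lt (fun h0 => hg (by simp [h0]))
  exact absurd (Polynomial.degree_le_of_dvd hdg hg) (not_le_of_gt hglt)
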